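/- Let A, B ∈ ℂ^{n×n} satisfy: (i) A A* - B B* is positive semidefinite, and (ii) the n×2n matrix [B -A] has rank n. Then A is nonsingular. -/

import Mathlib

open Matrix
open scoped ComplexOrder

theorem stmt_3 (n : ℕ) (A B : Matrix (Fin n) (Fin n) ℂ)
    (hpsd : (A * Aᴴ - B * Bᴴ).PosSemidef)
    (hrank : (Matrix.fromCols B (-A)).rank = n) : IsUnit A := by
  rw [Matrix.isUnit_iff_isUnit_det, isUnit_iff_ne_zero]
  intro hdet
  obtain ⟨v, hv, hvA⟩ := Matrix.exists_vecMul_eq_zero_iff.mpr hdet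
  -- PSD gives vecMul v B = 0
  have key := hpsd.dotProduct_mulVec_nonneg (star v)
  rw [star_star] at key
  have h1 : v ⬝ᵥ ((A * Aᴴ - B * Bᴴ) *ᵥ star v) =
      (v ᵥ* A) ⬝ᵥ star (v ᵥ* A) - (v ᵥ* B) ⬝ᵥ star (v ᵥ* B) := by
    rw [Matrix.sub_mulVec, dotProduct_sub, ← Matrix.mulVec_mulVec, ← Matrix.mulVec_mulVec,
      Matrix.mulVec_conjTranspose, Matrix.mulVec_conjTranspose]
    rw [dotProduct_mulVec, dotProduct_mulVec, star_star]
  rw [h1, hvA, zero_dotProduct, zero_sub] at key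
  have hB : v ᵥ* B = 0 := by
    by_contra hB
    have hpos : (0:ℂ) < (v ᵥ* B) ⬝ᵥ star (v ᵥ* B) := by
      have := Matrix.dotProduct_star_self_pos_iff (v := star (v ᵥ* B))
      rw [star_star] at this
      exact this.mpr (star_ne_zero.mpr hB)
    exact hpos.not_ge (neg_nonneg.mp key)
  -- left kernel vector of fromColumns B (-A)
  have hker : v ᵥ* (Matrix.fromCols B (-A)) = 0 := by
    rw [Matrix.vecMul_fromCols, Matrix.vecMul_neg, hB, hvA, neg_zero]
    ext (i | i) <;> rfl
  -- rank < n, contradiction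
  have hVne : star v ≠ 0 := star_ne_zero.mpr hv
  have hkerT : (Matrix.fromCols B (-A))ᴴ *ᵥ star v = 0 := by
    rw [Matrix.mulVec_conjTranspose, star_star, hker, star_zero]
  set M := (Matrix.fromCols B (-A))ᴴ with hM
  have hrank' : M.rank = n := by
    rw [hM, Matrix.rank_conjTranspose, hrank]
  have hmem : star v ∈ LinearMap.ker M.mulVecLin := by
    simpa [Matrix.mulVecLin_apply] using hkerT
  have hnull : 0 < Module.finrank ℂ (LinearMap.ker M.mulVecLin) := by
    refine Module.finrank_pos_iff.mpr (Submodule.nontrivial_iff_ne_bot.mpr ?_)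
    exact (Submodule.ne_bot_iff _).mpr ⟨star v, hmem, hVne⟩
  have hrn := LinearMap.finrank_range_add_finrank_ker M.mulVecLin
  rw [Module.finrank_fintype_fun_eq_card, Fintype.card_fin] at hrn
  have : M.rank + Module.finrank ℂ (LinearMap.ker M.mulVecLin) = n := hrn
  omega
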